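/- Let G be a torsion-free abelian group and E ⊆ G a maximal independent set in G. Then there exists an injective additive group homomorphism φ : G → ⊕_E ℚ (the group of finitely supported functions E → ℚ) such that φ(a) is the unit vector e_a for every a ∈ E, namely the map sending g to p/q where q • g = Σ_{a ∈ E} p(a) • a with q a positive integer and p : E → ℤ finitely supported. -/

import Mathlib

/-- A maximal independent set in an abelian group `G`. -/
def MaxIndependent {G : Type*} [AddCommGroup G] (E : Set G) : Prop :=
  LinearIndependent ℤ (fun a : E => (a : G)) ∧
  ∀ E' : Set G, E ⊆ E' → LinearIndependent ℤ (fun a : E' => (a : G)) → E' = E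

/-- a torsion-free abelian group with maximal independent set `E` embeds
into `⊕_E ℚ` via `g ↦ p / q` where `q • g = Σ_{a ∈ E} p a • a`, sending each `a ∈ E`
to the unit vector `e_a`. -/
theorem stmt6 {G : Type*} [AddCommGroup G]
    (htf : ∀ (n : ℤ) (g : G), n • g = 0 → n ≠ 0 → g = 0)
    (E : Set G) (hE : MaxIndependent E) :
    ∃ φ : G →+ (E →₀ ℚ),
      Function.Injective φ ∧
      (∀ a : E, φ (a : G) = Finsupp.single a 1) ∧
      (∀ (g : G) (q : ℕ) (p : E →₀ ℤ), 0 < q →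
        q • g = (p.sum fun a n => n • (a : G)) →
        ∀ a : E, φ g a = (p a : ℚ) / (q : ℚ)) := by
  classical
  obtain ⟨hind, hmax⟩ := hE
  set T : (E →₀ ℤ) →ₗ[ℤ] G := Finsupp.linearCombination ℤ ((↑) : E → G) with hT
  have hsum : ∀ p : E →₀ ℤ, T p = p.sum fun a n => n • (a : G) := fun p =>
    Finsupp.linearCombination_apply _ _
  have hinj0 : ∀ l : E →₀ ℤ, T l = 0 → l = 0 := fun l h => linearIndependent_iff.mp hind l h
  -- existence of a relation for every `g`
  have hex : ∀ g : G, ∃ (q : ℕ) (p : E →₀ ℤ), 0 < q ∧ (q : ℤ) • g = T p := by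
    intro g
    by_cases hg : g ∈ E
    · refine ⟨1, Finsupp.single ⟨g, hg⟩ 1, one_pos, ?_⟩
      rw [hT, Finsupp.linearCombination_single]
      simp
    · have hni : ¬ LinearIndependent ℤ (fun x : (insert g E : Set G) => (x : G)) := by
        intro h
        exact hg (by
          have := hmax _ (Set.subset_insert g E) h
          rw [← this]; exact Set.mem_insert g E)
      rw [linearIndependent_subtype_iff, linearIndepOn_iff] at hni
      push_neg at hni
      obtain ⟨l, hl_supp, hl_tot, hl_ne⟩ := hni
      have hsupp : ↑l.support ⊆ insert g E := (Finsupp.mem_supported ℤ l).mp hl_supp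
      have hn : l g ≠ 0 := by
        intro h0
        apply hl_ne
        refine (linearIndependent_subtype_iff.trans linearIndepOn_iff).mp hind l ((Finsupp.mem_supported ℤ l).mpr ?_) hl_tot
        intro x hx
        rcases hsupp hx with rfl | hxE
        · exact absurd h0 (Finsupp.mem_support_iff.mp hx)
        · exact hxE
      set l' := l.erase g with hl'
      have hl'supp : ∀ x ∈ l'.support, x ∈ E := by
        intro x hx
        rw [hl', Finsupp.support_erase, Finset.mem_erase] at hx
        rcases hsupp hx.2 with rfl | hxE
        · exact absurd rfl hx.1
        · exact hxE
      have key : Finsupp.linearCombination ℤ (id : G → G) l' = (-(l g)) • g := by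
        have h := hl_tot
        rw [← Finsupp.erase_add_single g l, map_add, Finsupp.linearCombination_single] at h
        have : Finsupp.linearCombination ℤ (id : G → G) l' = -(l g • id g) :=
          eq_neg_of_add_eq_zero_left h
        rw [this, id, neg_smul]
      set p0 : E →₀ ℤ := l'.subtypeDomain (· ∈ E) with hp0
      have hTp : T p0 = (-(l g)) • g := by
        rw [hsum, ← key, Finsupp.linearCombination_apply]
        exact Finsupp.sum_subtypeDomain_index (h := fun (i : G) (a : ℤ) => a • id i) hl'supp
      rcases lt_or_gt_of_ne hn with hlt | hgt
      · refine ⟨(-(l g)).toNat, p0, ?_, ?_⟩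
        · omega
        · rw [Int.toNat_of_nonneg (by omega), hTp]
      · refine ⟨(l g).toNat, -p0, ?_, ?_⟩
        · omega
        · rw [Int.toNat_of_nonneg (by omega), map_neg, hTp, neg_smul, neg_neg]
  choose Q P hQ hrel using hex
  -- compatibility of relations
  have hcomp : ∀ (g : G) (q1 q2 : ℕ) (p1 p2 : E →₀ ℤ), 0 < q1 → 0 < q2 →
      (q1 : ℤ) • g = T p1 → (q2 : ℤ) • g = T p2 →
      ∀ a : E, (p1 a : ℚ) / q1 = (p2 a : ℚ) / q2 := by
    intro g q1 q2 p1 p2 hq1 hq2 h1 h2 a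
    have h0 : T ((q2 : ℤ) • p1 - (q1 : ℤ) • p2) = 0 := by
      rw [map_sub, map_smul, map_smul, ← h1, ← h2, smul_smul, smul_smul, mul_comm, sub_self]
    have hz := hinj0 _ h0
    have hza : (q2 : ℤ) * p1 a - (q1 : ℤ) * p2 a = 0 := by
      have := congrFun (congrArg (fun f : E →₀ ℤ => (f : E → ℤ)) hz) a
      simpa [Finsupp.sub_apply, Finsupp.smul_apply, smul_eq_mul] using this
    rw [div_eq_div_iff (by exact_mod_cast hq1.ne') (by exact_mod_cast hq2.ne')]
    have : (q2 : ℤ) * p1 a = (q1 : ℤ) * p2 a := by omega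
    have := congrArg (fun n : ℤ => (n : ℚ)) this
    push_cast at this
    linarith
  set f : G → (E →₀ ℚ) := fun g =>
    (Q g : ℚ)⁻¹ • ((P g).mapRange (Int.cast : ℤ → ℚ) Int.cast_zero) with hf
  have hval : ∀ (g : G) (q : ℕ) (p : E →₀ ℤ), 0 < q → (q : ℤ) • g = T p →
      ∀ a : E, f g a = (p a : ℚ) / q := by
    intro g q p hq h a
    have : f g a = (P g a : ℚ) / (Q g) := by
      rw [hf]
      simp [Finsupp.mapRange_apply, div_eq_inv_mul]
    rw [this]
    exact hcomp g (Q g) q (P g) p (hQ g) hq (hrel g) h a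
  have hadd : ∀ g h : G, f (g + h) = f g + f h := by
    intro g h
    have hrel2 : ((Q g * Q h : ℕ) : ℤ) • (g + h) =
        T ((Q h : ℤ) • P g + (Q g : ℤ) • P h) := by
      rw [map_add, map_smul, map_smul, ← hrel g, ← hrel h, smul_smul, smul_smul, smul_add]
      push_cast
      module
    ext a
    rw [Finsupp.add_apply,
      hval (g + h) (Q g * Q h) ((Q h : ℤ) • P g + (Q g : ℤ) • P h)
        (Nat.mul_pos (hQ g) (hQ h)) hrel2 a,
      hval g (Q g) (P g) (hQ g) (hrel g) a, hval h (Q h) (P h) (hQ h) (hrel h) a]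
    have hg0 : (Q g : ℚ) ≠ 0 := by exact_mod_cast (hQ g).ne'
    have hh0 : (Q h : ℚ) ≠ 0 := by exact_mod_cast (hQ h).ne'
    rw [Finsupp.add_apply, Finsupp.smul_apply, Finsupp.smul_apply]
    push_cast
    field_simp
    simp only [smul_eq_mul]
    push_cast
    ring
  refine ⟨AddMonoidHom.mk' f hadd, ?_, ?_, ?_⟩
  · rw [injective_iff_map_eq_zero]
    intro g hg0
    have hp0 : P g = 0 := by
      ext a
      have := hval g (Q g) (P g) (hQ g) (hrel g) a
      rw [show (AddMonoidHom.mk' f hadd) g = f g from rfl] at hg0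
      rw [hg0] at this
      have hq0 : (Q g : ℚ) ≠ 0 := by exact_mod_cast (hQ g).ne'
      have : (P g a : ℚ) = 0 := by
        field_simp at this
        simpa using this.symm
      exact_mod_cast this
    have : (Q g : ℤ) • g = 0 := by rw [hrel g, hp0, map_zero]
    exact htf _ g this (by exact_mod_cast (hQ g).ne')
  · intro a
    have hr : ((1 : ℕ) : ℤ) • (a : G) = T (Finsupp.single a 1) := by
      rw [hT, Finsupp.linearCombination_single]
      simp
    ext b
    rw [show (AddMonoidHom.mk' f hadd) (a : G) = f (a : G) from rfl,
      hval (a : G) 1 (Finsupp.single a 1) one_pos hr b]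
    by_cases hba : b = a
    · subst hba; simp
    · simp [Finsupp.single_apply, Ne.symm hba, hba]
  · intro g q p hq hpr a
    have : (q : ℤ) • g = T p := by
      rw [hsum, ← hpr, natCast_zsmul]
    exact hval g q p hq this a
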